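/- Let R be a commutative ring and let a : F → F̃ be a quasi-isomorphism of ℕ-indexed chain complexes of finite free R-modules. Let b : F̃ → F be a homotopy inverse of a and let s : F̃₀ → F̃₁ be an R-linear map satisfying d̃₁ ∘ s = id_{F̃₀} − a₀ ∘ b₀. Define G to be the complex ⋯ → F₃ →(d₃)→ F₂ →(x ↦ (d₂x, 0))→ F₁ ⊕ F̃₀ → 0 and G̃ to be the complex ⋯ → F̃₃ →(d̃₃)→ F̃₂ →(x ↦ (0, d̃₂x))→ F₀ ⊕ F̃₁ → 0. Then the chain map G → G̃ given in degrees i ≥ 1 by a_{i+1} : F_{i+1} → F̃_{i+1} and in degree 0 by A(u, v) = (d₁u − b₀v, a₁u + sv) : F₁ ⊕ F̃₀ → F₀ ⊕ F̃₁ is a quasi-isomorphism. -/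

import Mathlib

open CategoryTheory

section Aux

variable {R : Type} [CommRing R]

/-- The terms of the modified complex: degree `0` is replaced by `P`, while degree `n+1`
is `F_{n+2}`. -/
noncomputable def auxX (F : ChainComplex (ModuleCat.{0} R) ℕ) (P : ModuleCat.{0} R) :
    ℕ → ModuleCat.{0} R
  | 0 => P
  | (n + 1) => F.X (n + 2)

/-- The differentials of the modified complex: in lowest degree we use `δ : F₂ ⟶ P`,
and above that the differentials of `F`. -/
noncomputable def auxD (F : ChainComplex (ModuleCat.{0} R) ℕ) (P : ModuleCat.{0} R)
    (δ : F.X 2 ⟶ P) : ∀ n : ℕ, auxX F P (n + 1) ⟶ auxX F P n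
  | 0 => δ
  | (n + 1) => F.d (n + 3) (n + 2)

lemma auxSq (F : ChainComplex (ModuleCat.{0} R) ℕ) (P : ModuleCat.{0} R) (δ : F.X 2 ⟶ P)
    (hδ : F.d 3 2 ≫ δ = 0) : ∀ n : ℕ, auxD F P δ (n + 1) ≫ auxD F P δ n = 0
  | 0 => hδ
  | (n + 1) => F.d_comp_d _ _ _

variable (F Ft : ChainComplex (ModuleCat.{0} R) ℕ)

/-- `δ_G : F₂ ⟶ F₁ ⊕ F̃₀`, `x ↦ (d₂ x, 0)`. -/
noncomputable def deltaG : F.X 2 ⟶ ModuleCat.of R (F.X 1 × Ft.X 0) :=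
  ModuleCat.ofHom (LinearMap.prod ((F.d 2 1).hom : F.X 2 →ₗ[R] F.X 1) 0)

/-- `δ_G̃ : F̃₂ ⟶ F₀ ⊕ F̃₁`, `x ↦ (0, d̃₂ x)`. -/
noncomputable def deltaGt : Ft.X 2 ⟶ ModuleCat.of R (F.X 0 × Ft.X 1) :=
  ModuleCat.ofHom (LinearMap.prod 0 ((Ft.d 2 1).hom : Ft.X 2 →ₗ[R] Ft.X 1))

lemma deltaG_sq : F.d 3 2 ≫ deltaG F Ft = 0 := by
  apply ModuleCat.hom_ext
  show (LinearMap.prod ((F.d 2 1).hom : F.X 2 →ₗ[R] F.X 1) 0).comp ((F.d 3 2).hom : F.X 3 →ₗ[R] F.X 2)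
      = (0 : F.X 3 →ₗ[R] (F.X 1 × Ft.X 0))
  apply LinearMap.ext; intro x
  have h1 : ((F.d 2 1).hom : F.X 2 →ₗ[R] F.X 1) (((F.d 3 2).hom : F.X 3 →ₗ[R] F.X 2) x) = 0 :=
    LinearMap.congr_fun
      (show ((F.d 2 1).hom : F.X 2 →ₗ[R] F.X 1).comp ((F.d 3 2).hom : F.X 3 →ₗ[R] F.X 2) = 0 from
        congrArg ModuleCat.Hom.hom (F.d_comp_d 3 2 1)) x
  simp [h1]

lemma deltaGt_sq : Ft.d 3 2 ≫ deltaGt F Ft = 0 := by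
  apply ModuleCat.hom_ext
  show (LinearMap.prod 0 ((Ft.d 2 1).hom : Ft.X 2 →ₗ[R] Ft.X 1)).comp
        ((Ft.d 3 2).hom : Ft.X 3 →ₗ[R] Ft.X 2)
      = (0 : Ft.X 3 →ₗ[R] (F.X 0 × Ft.X 1))
  apply LinearMap.ext; intro x
  have h1 : ((Ft.d 2 1).hom : Ft.X 2 →ₗ[R] Ft.X 1) (((Ft.d 3 2).hom : Ft.X 3 →ₗ[R] Ft.X 2) x) = 0 :=
    LinearMap.congr_fun
      (show ((Ft.d 2 1).hom : Ft.X 2 →ₗ[R] Ft.X 1).comp ((Ft.d 3 2).hom : Ft.X 3 →ₗ[R] Ft.X 2) = 0 from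
        congrArg ModuleCat.Hom.hom (Ft.d_comp_d 3 2 1)) x
  simp [h1]

/-- The complex `G : ⋯ → F₃ → F₂ → F₁ ⊕ F̃₀ → 0`. -/
noncomputable def complexG : ChainComplex (ModuleCat.{0} R) ℕ :=
  ChainComplex.of (auxX F (ModuleCat.of R (F.X 1 × Ft.X 0)))
    (auxD F _ (deltaG F Ft)) (auxSq F _ _ (deltaG_sq F Ft))

/-- The complex `G̃ : ⋯ → F̃₃ → F̃₂ → F₀ ⊕ F̃₁ → 0`. -/
noncomputable def complexGt : ChainComplex (ModuleCat.{0} R) ℕ :=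
  ChainComplex.of (auxX Ft (ModuleCat.of R (F.X 0 × Ft.X 1)))
    (auxD Ft _ (deltaGt F Ft)) (auxSq Ft _ _ (deltaGt_sq F Ft))

variable {F Ft}

/-- The degree-zero component `A : F₁ ⊕ F̃₀ ⟶ F₀ ⊕ F̃₁`,
`(u, v) ↦ (d₁ u - b₀ v, a₁ u + s v)`. -/
noncomputable def mapA (a : F ⟶ Ft) (b : Ft ⟶ F) (s : Ft.X 0 →ₗ[R] Ft.X 1) :
    ModuleCat.of R (F.X 1 × Ft.X 0) ⟶ ModuleCat.of R (F.X 0 × Ft.X 1) :=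
  ModuleCat.ofHom (LinearMap.prod
    (((F.d 1 0).hom : F.X 1 →ₗ[R] F.X 0).comp (LinearMap.fst R (F.X 1) (Ft.X 0))
      - ((b.f 0).hom : Ft.X 0 →ₗ[R] F.X 0).comp (LinearMap.snd R (F.X 1) (Ft.X 0)))
    (((a.f 1).hom : F.X 1 →ₗ[R] Ft.X 1).comp (LinearMap.fst R (F.X 1) (Ft.X 0))
      + s.comp (LinearMap.snd R (F.X 1) (Ft.X 0))))

lemma mapA_comm (a : F ⟶ Ft) (b : Ft ⟶ F) (s : Ft.X 0 →ₗ[R] Ft.X 1) :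
    a.f 2 ≫ deltaGt F Ft = deltaG F Ft ≫ mapA a b s := by
  apply ModuleCat.hom_ext
  show (LinearMap.prod (0 : Ft.X 2 →ₗ[R] F.X 0) ((Ft.d 2 1).hom : Ft.X 2 →ₗ[R] Ft.X 1)).comp
        ((a.f 2).hom : F.X 2 →ₗ[R] Ft.X 2)
      = (LinearMap.prod
          (((F.d 1 0).hom : F.X 1 →ₗ[R] F.X 0).comp (LinearMap.fst R (F.X 1) (Ft.X 0))
            - ((b.f 0).hom : Ft.X 0 →ₗ[R] F.X 0).comp (LinearMap.snd R (F.X 1) (Ft.X 0)))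
          (((a.f 1).hom : F.X 1 →ₗ[R] Ft.X 1).comp (LinearMap.fst R (F.X 1) (Ft.X 0))
            + s.comp (LinearMap.snd R (F.X 1) (Ft.X 0)))).comp
        (LinearMap.prod ((F.d 2 1).hom : F.X 2 →ₗ[R] F.X 1) (0 : F.X 2 →ₗ[R] Ft.X 0))
  apply LinearMap.ext; intro x
  have h1 : ((F.d 1 0).hom : F.X 1 →ₗ[R] F.X 0) (((F.d 2 1).hom : F.X 2 →ₗ[R] F.X 1) x) = 0 :=
    LinearMap.congr_fun
      (show ((F.d 1 0).hom : F.X 1 →ₗ[R] F.X 0).comp ((F.d 2 1).hom : F.X 2 →ₗ[R] F.X 1) = 0 from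
        congrArg ModuleCat.Hom.hom (F.d_comp_d 2 1 0)) x
  have h2 : ((Ft.d 2 1).hom : Ft.X 2 →ₗ[R] Ft.X 1) (((a.f 2).hom : F.X 2 →ₗ[R] Ft.X 2) x)
      = ((a.f 1).hom : F.X 1 →ₗ[R] Ft.X 1) (((F.d 2 1).hom : F.X 2 →ₗ[R] F.X 1) x) :=
    LinearMap.congr_fun
      (show ((Ft.d 2 1).hom : Ft.X 2 →ₗ[R] Ft.X 1).comp ((a.f 2).hom : F.X 2 →ₗ[R] Ft.X 2)
          = ((a.f 1).hom : F.X 1 →ₗ[R] Ft.X 1).comp ((F.d 2 1).hom : F.X 2 →ₗ[R] F.X 1) from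
        congrArg ModuleCat.Hom.hom (a.comm 2 1)) x
  simp [h1, h2]

/-- The chain map `G ⟶ G̃` which is `a_{n+2}` in degree `n+1` and `A` in degree `0`. -/
noncomputable def homGGt (a : F ⟶ Ft) (b : Ft ⟶ F) (s : Ft.X 0 →ₗ[R] Ft.X 1) :
    complexG F Ft ⟶ complexGt F Ft :=
  ChainComplex.ofHom
    (fun n => match n with
      | 0 => mapA a b s
      | (n + 1) => a.f (n + 2))
    (fun n => match n with
      | 0 => by
        simp only [complexG, complexGt, ChainComplex.of_d]
        exact mapA_comm a b s
      | (n + 1) => by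
        simp only [complexG, complexGt, ChainComplex.of_d]
        exact a.comm (n + 3) (n + 2))

end Aux

variable {R : Type} [CommRing R]

namespace MyQI



variable {S₁ S₂ : ShortComplex (ModuleCat.{0} R)} (φ : S₁ ⟶ S₂)

lemma ShortComplex.moduleCatToCycles_apply_coe (S : ShortComplex (ModuleCat.{0} R)) (y : S.X₁) :
    (S.moduleCatToCycles y : S.X₂) = S.f y := rfl

noncomputable def phiK : LinearMap.ker S₁.g.hom →ₗ[R] LinearMap.ker S₂.g.hom :=
  LinearMap.restrict φ.τ₂.hom (fun x hx => by
    have : S₂.g.hom (φ.τ₂.hom x) = φ.τ₃.hom (S₁.g.hom x) := by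
      have := LinearMap.congr_fun
        (congrArg (fun (f : S₁.X₂ ⟶ S₂.X₃) => f.hom) φ.comm₂₃) x
      simpa using this
    simp only [LinearMap.mem_ker] at hx ⊢
    rw [this, hx, map_zero])

lemma phiK_apply (x : LinearMap.ker S₁.g.hom) : (phiK φ x : S₂.X₂) = φ.τ₂ (x : S₁.X₂) := rfl

lemma tau₂_f (x : S₁.X₁) : φ.τ₂ (S₁.f x) = S₂.f (φ.τ₁ x) := by
  have := LinearMap.congr_fun
    (congrArg (fun (f : S₁.X₁ ⟶ S₂.X₂) => f.hom) φ.comm₁₂) x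
  exact this.symm

lemma phiK_range (x : LinearMap.ker S₁.g.hom)
    (hx : x ∈ LinearMap.range S₁.moduleCatToCycles) :
    phiK φ x ∈ LinearMap.range S₂.moduleCatToCycles := by
  obtain ⟨y, hy⟩ := hx
  exact ⟨φ.τ₁ y, by ext; simp [phiK_apply, ← hy, tau₂_f, ShortComplex.moduleCatToCycles_apply_coe]⟩

noncomputable def phiH : S₁.moduleCatLeftHomologyData.H →ₗ[R] S₂.moduleCatLeftHomologyData.H :=
  Submodule.mapQ _ _ (phiK φ) (fun x hx => phiK_range φ x hx)

noncomputable def lhmd : ShortComplex.LeftHomologyMapData φ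
    S₁.moduleCatLeftHomologyData S₂.moduleCatLeftHomologyData where
  φK := ModuleCat.ofHom (phiK φ)
  φH := ModuleCat.ofHom (phiH φ)
  commi := by ext x; rfl
  commf' := by
    ext x
    exact Subtype.ext (tau₂_f φ x)
  commπ := by ext x; rfl

lemma lhmd_phiH : (lhmd φ).φH = ModuleCat.ofHom (phiH φ) := rfl

lemma quasiIso_iff_elem :
    ShortComplex.QuasiIso φ ↔
      ((∀ x : S₁.X₂, S₁.g x = 0 → (∃ y : S₂.X₁, φ.τ₂ x = S₂.f y) →
          ∃ w : S₁.X₁, x = S₁.f w) ∧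
       (∀ y : S₂.X₂, S₂.g y = 0 → ∃ (x : S₁.X₂) (z : S₂.X₁),
          S₁.g x = 0 ∧ y = φ.τ₂ x + S₂.f z)) := by
  rw [ShortComplex.quasiIso_iff]
  have heq := (lhmd φ).homologyMap_eq
  rw [lhmd_phiH] at heq
  constructor
  · intro h
    have hH : IsIso (ModuleCat.ofHom (phiH φ)) := by
      have : ModuleCat.ofHom (phiH φ) =
          S₁.moduleCatLeftHomologyData.homologyIso.inv ≫ ShortComplex.homologyMap φ ≫
            S₂.moduleCatLeftHomologyData.homologyIso.hom := by
        rw [heq]; simp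
      rw [this]; infer_instance
    have hbij : Function.Bijective (phiH φ) :=
      (ConcreteCategory.isIso_iff_bijective _).1 hH
    constructor
    · intro x hx ⟨y, hy⟩
      have h0 : phiH φ (Submodule.Quotient.mk ⟨x, hx⟩) = 0 := by
        show Submodule.Quotient.mk (phiK φ ⟨x, hx⟩) = 0
        rw [Submodule.Quotient.mk_eq_zero]
        exact ⟨y, Subtype.ext (by simpa [phiK_apply, ShortComplex.moduleCatToCycles_apply_coe] using hy.symm)⟩
      have := hbij.1 (by rw [h0, map_zero] : phiH φ (Submodule.Quotient.mk ⟨x, hx⟩) = phiH φ 0)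
      replace this := (Submodule.Quotient.mk_eq_zero _).1 this
      obtain ⟨w, hw⟩ := this
      exact ⟨w, congrArg Subtype.val hw.symm⟩
    · intro y hy
      obtain ⟨ξ, hξ⟩ := hbij.2 (Submodule.Quotient.mk ⟨y, hy⟩)
      obtain ⟨x, rfl⟩ := Submodule.mkQ_surjective _ ξ
      have : phiK φ x - ⟨y, hy⟩ ∈ LinearMap.range S₂.moduleCatToCycles := by
        rw [← Submodule.Quotient.eq]
        exact hξ
      obtain ⟨z, hz⟩ := this
      refine ⟨x, -z, x.2, ?_⟩
      have := congrArg Subtype.val hz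
      simp only [ShortComplex.moduleCatToCycles_apply_coe] at this
      have : S₂.f z = φ.τ₂ (x : S₁.X₂) - y := by
        simpa [phiK_apply] using this
      rw [map_neg]
      rw [this]
      abel
  · rintro ⟨hinj, hsurj⟩
    have hbij : Function.Bijective (phiH φ) := by
      constructor
      · rw [injective_iff_map_eq_zero]
        intro ξ hξ
        obtain ⟨x, rfl⟩ := Submodule.mkQ_surjective _ ξ
        have : phiK φ x ∈ LinearMap.range S₂.moduleCatToCycles := by
          rw [← Submodule.Quotient.mk_eq_zero]
          exact hξ
        obtain ⟨y, hy⟩ := this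
        obtain ⟨w, hw⟩ := hinj x x.2 ⟨y, (congrArg Subtype.val hy).symm⟩
        rw [Submodule.mkQ_apply]
        exact (Submodule.Quotient.mk_eq_zero _).2 ⟨w, Subtype.ext hw.symm⟩
      · intro ξ
        obtain ⟨y, rfl⟩ := Submodule.mkQ_surjective _ ξ
        obtain ⟨x, z, hx, hyz⟩ := hsurj y y.2
        refine ⟨Submodule.Quotient.mk ⟨x, hx⟩, ?_⟩
        have step : phiH φ (Submodule.Quotient.mk ⟨x, hx⟩)
            = Submodule.Quotient.mk (phiK φ ⟨x, hx⟩) := rfl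
        rw [Submodule.mkQ_apply, step]
        refine (Submodule.Quotient.eq _).2 ⟨-z, Subtype.ext ?_⟩
        show S₂.f (-z) = φ.τ₂ x - (y : S₂.X₂)
        rw [map_neg, hyz]
        abel
    have : IsIso (ModuleCat.ofHom (phiH φ)) :=
      (ConcreteCategory.isIso_iff_bijective _).2 hbij
    rw [heq]
    infer_instance




lemma quasiIsoAt_succ_iff_elem {K L : ChainComplex (ModuleCat.{0} R) ℕ} (f : K ⟶ L) (j : ℕ) :
    QuasiIsoAt f (j + 1) ↔
      ((∀ x : K.X (j + 1), K.d (j + 1) j x = 0 →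
          (∃ y : L.X (j + 2), f.f (j + 1) x = L.d (j + 2) (j + 1) y) →
          ∃ w : K.X (j + 2), x = K.d (j + 2) (j + 1) w) ∧
       (∀ y : L.X (j + 1), L.d (j + 1) j y = 0 →
          ∃ (x : K.X (j + 1)) (z : L.X (j + 2)),
            K.d (j + 1) j x = 0 ∧ y = f.f (j + 1) x + L.d (j + 2) (j + 1) z)) := by
  rw [quasiIsoAt_iff' f (j + 2) (j + 1) j (by simp [ChainComplex.prev])
    (by simp [ChainComplex.next_nat_succ])]
  rw [quasiIso_iff_elem]
  rfl

end MyQI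

namespace MyQI

lemma quasiIsoAt_zero_iff_elem {R : Type} [CommRing R]
    {K L : ChainComplex (ModuleCat.{0} R) ℕ} (f : K ⟶ L) :
    QuasiIsoAt f 0 ↔
      ((∀ x : K.X 0, (∃ y : L.X 1, f.f 0 x = L.d 1 0 y) → ∃ w : K.X 1, x = K.d 1 0 w) ∧
       (∀ y : L.X 0, ∃ (x : K.X 0) (z : L.X 1), y = f.f 0 x + L.d 1 0 z)) := by
  have hdK : K.d 0 0 = 0 := HomologicalComplex.shape _ _ _ (by simp)
  have hdL : L.d 0 0 = 0 := HomologicalComplex.shape _ _ _ (by simp)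
  rw [quasiIsoAt_iff' f 1 0 0 (by simp [ChainComplex.prev]) (by simp [ChainComplex.next_nat_zero]),
    quasiIso_iff_elem]
  show (_ ∧ _) ↔ _
  constructor
  · rintro ⟨h1, h2⟩
    constructor
    · intro x hx
      exact h1 x (by simp only [HomologicalComplex.shortComplexFunctor'_obj_g, hdK]; rfl) hx
    · intro y
      obtain ⟨x, z, _, hxz⟩ := h2 y (by simp only [HomologicalComplex.shortComplexFunctor'_obj_g, hdL]; rfl)
      exact ⟨x, z, hxz⟩
  · rintro ⟨h1, h2⟩
    constructor
    · intro x _ hx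
      exact h1 x hx
    · intro y _
      obtain ⟨x, z, hxz⟩ := h2 y
      exact ⟨x, z, by simp only [HomologicalComplex.shortComplexFunctor'_obj_g, hdK]; rfl, hxz⟩

end MyQI

/-- **Lemma.** Let `a : F → F̃` be a quasi-isomorphism of ℕ-indexed chain complexes of
finite free `R`-modules, let `b : F̃ → F` be a homotopy inverse of `a` and let
`s : F̃₀ → F̃₁` satisfy `d̃₁ ∘ s = id - a₀ ∘ b₀`.  Then the chain map from
`G : ⋯ → F₃ → F₂ → F₁ ⊕ F̃₀ → 0` to `G̃ : ⋯ → F̃₃ → F̃₂ → F₀ ⊕ F̃₁ → 0` given by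
`a_{n+2}` in degrees `n + 1 ≥ 1` and by `A(u,v) = (d₁ u - b₀ v, a₁ u + s v)` in degree `0`
is a quasi-isomorphism. -/
theorem homGGt_quasiIso {R : Type} [CommRing R]
    {F Ft : ChainComplex (ModuleCat.{0} R) ℕ} {rF rFt : ℕ → ℕ}
    (bF : ∀ j, Module.Basis (Fin (rF j)) R (F.X j))
    (bFt : ∀ j, Module.Basis (Fin (rFt j)) R (Ft.X j))
    (a : F ⟶ Ft) (ha : QuasiIso a) (b : Ft ⟶ F)
    (h₁ : Homotopy (a ≫ b) (𝟙 F)) (h₂ : Homotopy (b ≫ a) (𝟙 Ft))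
    (s : Ft.X 0 →ₗ[R] Ft.X 1)
    (hs : ((Ft.d 1 0).hom : Ft.X 1 →ₗ[R] Ft.X 0).comp s
        = LinearMap.id - ((a.f 0).hom : F.X 0 →ₗ[R] Ft.X 0).comp (b.f 0).hom) :
    QuasiIso (homGGt a b s) := by
  classical
  obtain ⟨ainj1, asurj1⟩ := (MyQI.quasiIsoAt_succ_iff_elem a 0).1 (ha.quasiIsoAt 1)
  have hGd0 : (complexG F Ft).d 1 0 = deltaG F Ft :=
    ChainComplex.of_d (auxX F (ModuleCat.of R (F.X 1 × Ft.X 0))) (auxD F _ (deltaG F Ft)) 0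
  have hGtd0 : (complexGt F Ft).d 1 0 = deltaGt F Ft :=
    ChainComplex.of_d (auxX Ft (ModuleCat.of R (F.X 0 × Ft.X 1))) (auxD Ft _ (deltaGt F Ft)) 0
  have hGd : ∀ n : ℕ, (complexG F Ft).d (n + 2) (n + 1) = F.d (n + 3) (n + 2) :=
    fun n => ChainComplex.of_d (auxX F (ModuleCat.of R (F.X 1 × Ft.X 0))) (auxD F _ (deltaG F Ft)) (n + 1)
  have hGtd : ∀ n : ℕ, (complexGt F Ft).d (n + 2) (n + 1) = Ft.d (n + 3) (n + 2) :=
    fun n => ChainComplex.of_d (auxX Ft (ModuleCat.of R (F.X 0 × Ft.X 1))) (auxD Ft _ (deltaGt F Ft)) (n + 1)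
  have hf0 : (homGGt a b s).f 0 = mapA a b s := rfl
  have hfs : ∀ n : ℕ, (homGGt a b s).f (n + 1) = a.f (n + 2) := fun n => rfl
  have elem : ∀ {M N : ModuleCat.{0} R} {f g : M ⟶ N}, f = g → ∀ x : M, f x = g x :=
    fun h x => by rw [h]
  have hsE : ∀ v : Ft.X 0, Ft.d 1 0 (s v) = v - a.f 0 (b.f 0 v) := fun v =>
    LinearMap.congr_fun hs v
  have E1 : ∀ x : F.X 0, b.f 0 (a.f 0 x) = F.d 1 0 (h₁.hom 0 1 x) + x := by
    intro x
    have h := h₁.comm 0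
    rw [Homotopy.dNext_zero_chainComplex, Homotopy.prevD_chainComplex] at h
    simpa using elem h x
  have E4 : ∀ v : Ft.X 0, a.f 0 (b.f 0 v) = Ft.d 1 0 (h₂.hom 0 1 v) + v := by
    intro v
    have h := h₂.comm 0
    rw [Homotopy.dNext_zero_chainComplex, Homotopy.prevD_chainComplex] at h
    simpa using elem h v
  have E2 : ∀ z : Ft.X 1, a.f 1 (b.f 1 z) =
      h₂.hom 0 1 (Ft.d 1 0 z) + Ft.d 2 1 (h₂.hom 1 2 z) + z := by
    intro z
    have h := h₂.comm 1
    rw [Homotopy.dNext_succ_chainComplex, Homotopy.prevD_chainComplex] at h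
    simpa using elem h z
  have sqa : ∀ (i : ℕ) (x : F.X (i + 1)), Ft.d (i + 1) i (a.f (i + 1) x)
      = a.f i (F.d (i + 1) i x) := fun i x =>
    LinearMap.congr_fun
      (congrArg ModuleCat.Hom.hom (a.comm (i + 1) i)) x
  have sqb : ∀ (i : ℕ) (z : Ft.X (i + 1)), F.d (i + 1) i (b.f (i + 1) z)
      = b.f i (Ft.d (i + 1) i z) := fun i z =>
    LinearMap.congr_fun
      (congrArg ModuleCat.Hom.hom (b.comm (i + 1) i)) z
  have ddFt : ∀ (i : ℕ) (x : Ft.X (i + 2)), Ft.d (i + 1) i (Ft.d (i + 2) (i + 1) x) = 0 :=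
    fun i x =>
    (LinearMap.congr_fun
      (congrArg ModuleCat.Hom.hom (Ft.d_comp_d (i + 2) (i + 1) i)) x)
  refine ⟨fun n => ?_⟩
  rcases n with _ | _ | n
  · -- degree 0
    rw [MyQI.quasiIsoAt_zero_iff_elem]
    simp only [hGd0, hGtd0, hf0]
    constructor
    · rintro ⟨u, v⟩ ⟨t, ht⟩
      have ht1 : F.d 1 0 u - b.f 0 v = (0 : F.X 0) := congrArg Prod.fst ht
      have ht2 : a.f 1 u + s v = Ft.d 2 1 t := congrArg Prod.snd ht
      have ht1' : F.d 1 0 u = b.f 0 v := by rwa [sub_eq_zero] at ht1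
      have happ := congrArg (Ft.d 1 0) ht2
      rw [map_add, ddFt 0 t, sqa 0 u, ht1', hsE v, E4 v] at happ
      have hv : v = 0 := by
        rw [show Ft.d 1 0 (h₂.hom 0 1 v) + v + (v - (Ft.d 1 0 (h₂.hom 0 1 v) + v))
          = v from by abel] at happ
        exact happ
      have hdu : F.d 1 0 u = 0 := by rw [ht1', hv, map_zero]
      obtain ⟨w, hw⟩ := ainj1 u hdu ⟨t, by rw [← ht2, hv, map_zero, add_zero]⟩
      refine ⟨w, ?_⟩
      show (u, v) = deltaG F Ft w
      rw [show deltaG F Ft w = (F.d 2 1 w, (0 : Ft.X 0)) from rfl, hv, hw]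
    · rintro ⟨w, z⟩
      set z' : Ft.X 1 := z + a.f 1 (h₁.hom 0 1 w) + s (a.f 0 w) with hz'
      have hzeta : Ft.d 1 0 (-(s (Ft.d 1 0 z') + h₂.hom 0 1 (Ft.d 1 0 z'))) = 0 := by
        rw [map_neg, neg_eq_zero, map_add, hsE, E4]
        abel
      obtain ⟨c, τ, hc, hcτ⟩ := asurj1 (-(s (Ft.d 1 0 z') + h₂.hom 0 1 (Ft.d 1 0 z'))) hzeta
      have hc' : F.d 1 0 c = 0 := hc
      have hcτ' : -(s (Ft.d 1 0 z') + h₂.hom 0 1 (Ft.d 1 0 z'))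
          = a.f 1 c + Ft.d 2 1 τ := hcτ
      refine ⟨(-(h₁.hom 0 1 w) + b.f 1 z' + c, -(a.f 0 w) + Ft.d 1 0 z'),
        τ - h₂.hom 1 2 z', ?_⟩
      show ((w, z) : F.X 0 × Ft.X 1) = mapA a b s _ + deltaGt F Ft _
      rw [show mapA a b s (-(h₁.hom 0 1 w) + b.f 1 z' + c, -(a.f 0 w) + Ft.d 1 0 z')
          = (F.d 1 0 (-(h₁.hom 0 1 w) + b.f 1 z' + c) - b.f 0 (-(a.f 0 w) + Ft.d 1 0 z'),
             a.f 1 (-(h₁.hom 0 1 w) + b.f 1 z' + c) + s (-(a.f 0 w) + Ft.d 1 0 z')) from rfl,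
        show deltaGt F Ft (τ - h₂.hom 1 2 z')
          = ((0 : F.X 0), Ft.d 2 1 (τ - h₂.hom 1 2 z')) from rfl, Prod.mk_add_mk]
      refine Prod.ext ?_ ?_
      · show w = F.d 1 0 (-(h₁.hom 0 1 w) + b.f 1 z' + c)
            - b.f 0 (-(a.f 0 w) + Ft.d 1 0 z') + 0
        simp only [map_add, map_neg, map_sub]
        rw [hc', sqb 0 z', E1 w]
        abel
      · show z = a.f 1 (-(h₁.hom 0 1 w) + b.f 1 z' + c) + s (-(a.f 0 w) + Ft.d 1 0 z')
            + Ft.d 2 1 (τ - h₂.hom 1 2 z')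
        have hac : a.f 1 c = -(s (Ft.d 1 0 z') + h₂.hom 0 1 (Ft.d 1 0 z')) - Ft.d 2 1 τ := by
          rw [hcτ']; abel
        simp only [map_add, map_neg, map_sub]
        rw [hac, E2 z', hz']
        simp only [map_add]
        abel
  · -- degree 1
    obtain ⟨ainj2, asurj2⟩ := (MyQI.quasiIsoAt_succ_iff_elem a 1).1 (ha.quasiIsoAt 2)
    rw [MyQI.quasiIsoAt_succ_iff_elem]
    simp only [hGd0, hGtd0, hGd 0, hGtd 0, hfs 0]
    constructor
    · intro x hx hy
      refine ainj2 x ?_ hy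
      exact congrArg Prod.fst (hx : (F.d 2 1 x, (0 : Ft.X 0)) = ((0 : F.X 1), (0 : Ft.X 0)))
    · intro y hy
      have hy' : Ft.d 2 1 y = 0 :=
        congrArg Prod.snd (hy : ((0 : F.X 0), Ft.d 2 1 y) = ((0 : F.X 0), (0 : Ft.X 1)))
      obtain ⟨x, zz, hx, hxz⟩ := asurj2 y hy'
      refine ⟨x, zz, ?_, hxz⟩
      show ((F.d 2 1 x, (0 : Ft.X 0)) : F.X 1 × Ft.X 0) = 0
      rw [hx]
      rfl
  · -- degrees ≥ 2
    rw [MyQI.quasiIsoAt_succ_iff_elem]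
    simp only [hGd n, hGtd n, hGd (n + 1), hGtd (n + 1), hfs (n + 1)]
    exact (MyQI.quasiIsoAt_succ_iff_elem a (n + 2)).1 (ha.quasiIsoAt (n + 3))
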